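/- There exists a 3-uniform hypergraph on 9 vertices with no linear cycle in which every vertex has degree exactly 8. (Construction: take K_4^3 on vertices {u_1,u_2,v_1,v_2}, a vertex-disjoint copy of K_5^3, and add the hyperedges u_1u_2x and v_1v_2x for each vertex x of the K_5^3.) -/
import Mathlib


/-- A linear cycle of length `k ≥ 3` in a 3-uniform hypergraph with edge set `E`:
an alternating cyclic sequence of distinct vertices `v i` and distinct hyperedges `h i`
with `h i ∩ h (i+1) = {v (i+1)}` and non-consecutive hyperedges disjoint. -/
def IsLinearCycle {V : Type*} [DecidableEq V] (E : Finset (Finset V)) (k : ℕ)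
    (v : ZMod k → V) (h : ZMod k → Finset V) : Prop :=
  3 ≤ k ∧ Function.Injective v ∧ Function.Injective h ∧
    (∀ i, h i ∈ E) ∧ (∀ i, h i ∩ h (i + 1) = {v (i + 1)}) ∧
    (∀ i j, i ≠ j → i + 1 ≠ j → j + 1 ≠ i → h i ∩ h j = ∅)

/-- `E` contains a linear cycle. -/
def HasLinearCycle {V : Type*} [DecidableEq V] (E : Finset (Finset V)) : Prop :=
  ∃ (k : ℕ) (v : ZMod k → V) (h : ZMod k → Finset V), IsLinearCycle E k v h

/-- The degree of a vertex: the number of hyperedges containing it. -/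
def hDegree {V : Type*} [DecidableEq V] (E : Finset (Finset V)) (v : V) : ℕ :=
  (E.filter (fun e => v ∈ e)).card

/-- The support of a vertex `v` in a hyperedge `h`: the pairs of `h` that form a
hyperedge together with `v`. -/
def hSupport {V : Type*} [DecidableEq V] (E : Finset (Finset V)) (h : Finset V) (v : V) :
    Finset (Finset V) :=
  (h.powersetCard 2).filter (fun p => insert v p ∈ E)

/-- A pair of vertices is thick if at least two hyperedges contain it. -/
def ThickPair {V : Type*} [DecidableEq V] (E : Finset (Finset V)) (a b : V) : Prop :=
  2 ≤ (E.filter (fun e => a ∈ e ∧ b ∈ e)).card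

/-- A hyperedge is thick if each of its pairs is contained in at least two hyperedges. -/
def ThickEdge {V : Type*} [DecidableEq V] (E : Finset (Finset V)) (h : Finset V) : Prop :=
  ∀ p ∈ h.powersetCard 2, 2 ≤ (E.filter (fun e => p ⊆ e)).card

/-- `v ∉ h` is strongly associated to the hyperedge `h` if at least two of the 3-sets
formed by `v` and a pair of `h` are hyperedges. -/
def StronglyAssoc {V : Type*} [DecidableEq V] (E : Finset (Finset V)) (h : Finset V) (v : V) :
    Prop :=
  v ∉ h ∧ 2 ≤ (hSupport E h v).card

/-- A linear path of length `k` (given by its sequence of hyperedges): consecutive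
hyperedges meet in exactly one vertex, non-consecutive ones are disjoint. -/
def IsLinearPath {V : Type*} [DecidableEq V] (E : Finset (Finset V)) (k : ℕ)
    (h : Fin k → Finset V) : Prop :=
  Function.Injective h ∧ (∀ i, h i ∈ E) ∧
    (∀ i j : Fin k, (i : ℕ) + 1 = (j : ℕ) → (h i ∩ h j).card = 1) ∧
    (∀ i j : Fin k, (i : ℕ) + 2 ≤ (j : ℕ) → h i ∩ h j = ∅)

/-- A linear tree with vertex set `S` and edge set `T`: built from a single vertex by
repeatedly adding hyperedges meeting the current vertex set in exactly one vertex. -/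
inductive IsLinearTree {V : Type*} [DecidableEq V] : Finset V → Finset (Finset V) → Prop
  | single (v : V) : IsLinearTree {v} ∅
  | extend {S : Finset V} {T : Finset (Finset V)} (e : Finset V) :
      IsLinearTree S T → e.card = 3 → (e ∩ S).card = 1 → IsLinearTree (S ∪ e) (insert e T)

set_option maxRecDepth 8000

def myK5 : Finset (Fin 9) := {4,5,6,7,8}

def E9 : Finset (Finset (Fin 9)) :=
  { {0,1,2},{0,1,3},{0,2,3},{1,2,3},
    {4,5,6},{4,5,7},{4,5,8},{4,6,7},{4,6,8},{4,7,8},{5,6,7},{5,6,8},{5,7,8},{6,7,8},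
    {0,1,4},{0,1,5},{0,1,6},{0,1,7},{0,1,8},
    {2,3,4},{2,3,5},{2,3,6},{2,3,7},{2,3,8} }

lemma E9_card3 : ∀ e ∈ E9, e.card = 3 := by decide

lemma E9_class : ∀ e ∈ E9,
    ((0:Fin 9) ∈ e ∧ (1:Fin 9) ∈ e) ∨ ((2:Fin 9) ∈ e ∧ (3:Fin 9) ∈ e) ∨ e ⊆ myK5 := by decide

lemma K5_ne : ∀ x ∈ myK5, x ≠ (0:Fin 9) ∧ x ≠ 1 ∧ x ≠ 2 ∧ x ≠ 3 := by decide

lemma K5_card : myK5.card = 5 := by decide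

lemma E9_deg : ∀ v : Fin 9, hDegree E9 v = 8 := by decide

lemma edge_eq3 {α : Type*} [DecidableEq α] {s : Finset α} {a b w : α} (hc : s.card = 3)
    (ha : a ∈ s) (hb : b ∈ s) (hw : w ∈ s) (hab : a ≠ b) (hwa : w ≠ a) (hwb : w ≠ b) :
    s = {a, b, w} := by
  have hsub : ({a, b, w} : Finset α) ⊆ s := by
    intro x hx
    simp only [Finset.mem_insert, Finset.mem_singleton] at hx
    rcases hx with rfl | rfl | rfl <;> assumption
  refine (Finset.eq_of_subset_of_card_le hsub ?_).symm
  rw [hc, Finset.card_insert_of_notMem (by simp [hab, Ne.symm hwa]),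
    Finset.card_insert_of_notMem (by simp [Ne.symm hwb]), Finset.card_singleton]

theorem no_cycle_aux : ∀ (k : ℕ) (v : ZMod k → Fin 9) (h : ZMod k → Finset (Fin 9)),
    3 ≤ k → Function.Injective v →
    (∀ i, h i ∈ E9) → (∀ i, h i ∩ h (i + 1) = {v (i + 1)}) →
    (∀ i j, i ≠ j → i + 1 ≠ j → j + 1 ≠ i → h i ∩ h j = ∅) → False := by
  intro k v h hk3 hv hE hcons hfar
  obtain ⟨m, rfl⟩ : ∃ m, k = m + 3 := ⟨k - 3, by omega⟩
  have hz : ∀ a : ℕ, 0 < a → a < m + 3 → ((a : ZMod (m+3)) ≠ 0) := by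
    intro a ha1 ha2 e
    rw [ZMod.natCast_eq_zero_iff] at e
    have := Nat.le_of_dvd ha1 e
    omega
  have h1 : (1 : ZMod (m+3)) ≠ 0 := by have := hz 1 (by omega) (by omega); simpa using this
  have h2 : (2 : ZMod (m+3)) ≠ 0 := by have := hz 2 (by omega) (by omega); simpa using this
  have hmem : ∀ i : ZMod (m+3), v (i+1) ∈ h i ∧ v (i+1) ∈ h (i+1) := by
    intro i
    have : v (i+1) ∈ h i ∩ h (i+1) := by rw [hcons i]; exact Finset.mem_singleton_self _
    exact Finset.mem_inter.mp this
  have hint : ∀ i j : ZMod (m+3), i ≠ j → (h i ∩ h j).card ≤ 1 := by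
    intro i j hij
    by_cases e1 : i + 1 = j
    · subst e1; rw [hcons i]; simp
    · by_cases e2 : j + 1 = i
      · rw [Finset.inter_comm]; subst e2; rw [hcons j]; simp
      · rw [hfar i j hij e1 e2]; simp
  have huniq : ∀ (a b : Fin 9), a ≠ b → ∀ i j : ZMod (m+3),
      a ∈ h i → b ∈ h i → a ∈ h j → b ∈ h j → i = j := by
    intro a b hab i j hai hbi haj hbj
    by_contra hij
    have hc := hint i j hij
    have : 1 < (h i ∩ h j).card :=
      Finset.one_lt_card.mpr ⟨a, Finset.mem_inter.mpr ⟨hai, haj⟩,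
        b, Finset.mem_inter.mpr ⟨hbi, hbj⟩, hab⟩
    omega
  have hcl : ∀ i, ((0:Fin 9) ∈ h i ∧ (1:Fin 9) ∈ h i) ∨
      ((2:Fin 9) ∈ h i ∧ (3:Fin 9) ∈ h i) ∨ h i ⊆ myK5 := fun i => E9_class _ (hE i)
  have hc3 : ∀ i, (h i).card = 3 := fun i => E9_card3 _ (hE i)
  have gen1 : ∀ (p : ZMod (m+3)) (a b : Fin 9), a ≠ b →
      (∀ x ∈ myK5, x ≠ a ∧ x ≠ b) →
      a ∈ h p → b ∈ h p → h (p-1) ⊆ myK5 → h (p+1) ⊆ myK5 → False := by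
    intro p a b hab hk ha hb hB1 hB2
    have e1 : p - 1 + 1 = p := by ring
    have hv1 : v p ∈ h (p-1) ∧ v p ∈ h p := by have := hmem (p-1); rwa [e1] at this
    have hv2 := hmem p
    have hk1 := hk _ (hB1 hv1.1)
    have hk2 := hk _ (hB2 hv2.2)
    have heq := edge_eq3 (hc3 p) ha hb hv1.2 hab hk1.1 hk1.2
    have hm1 : v (p+1) ∈ ({a, b, v p} : Finset (Fin 9)) := heq ▸ hv2.1
    simp only [Finset.mem_insert, Finset.mem_singleton] at hm1
    rcases hm1 with e | e | e
    · exact hk2.1 e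
    · exact hk2.2 e
    · have := hv e; exact h1 (by linear_combination this)
  have gen2 : ∀ (p : ZMod (m+3)) (a b c d : Fin 9),
      a ≠ b → c ≠ d → a ≠ c → a ≠ d → b ≠ c → b ≠ d →
      (∀ x ∈ myK5, x ≠ a ∧ x ≠ b ∧ x ≠ c ∧ x ≠ d) →
      a ∈ h p → b ∈ h p → c ∈ h (p+1) → d ∈ h (p+1) →
      h (p-1) ⊆ myK5 → h (p+1+1) ⊆ myK5 → False := by
    intro p a b c d hab hcd hac had hbc hbd hk ha hb hc hd hB1 hB2
    have e1 : p - 1 + 1 = p := by ring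
    have hv1 : v p ∈ h (p-1) ∧ v p ∈ h p := by have := hmem (p-1); rwa [e1] at this
    have hv2 := hmem p
    have hv3 := hmem (p+1)
    have hk1 := hk _ (hB1 hv1.1)
    have hk3 := hk _ (hB2 hv3.2)
    have heqp := edge_eq3 (hc3 p) ha hb hv1.2 hab hk1.1 hk1.2.1
    have heqq := edge_eq3 (hc3 (p+1)) hc hd hv3.1 hcd hk3.2.2.1 hk3.2.2.2
    have m1 : v (p+1) ∈ ({a, b, v p} : Finset (Fin 9)) := heqp ▸ hv2.1
    have m2 : v (p+1) ∈ ({c, d, v (p+1+1)} : Finset (Fin 9)) := heqq ▸ hv2.2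
    simp only [Finset.mem_insert, Finset.mem_singleton] at m1 m2
    rcases m1 with e | e | e
    · rcases m2 with f | f | f
      · exact hac (e.symm.trans f)
      · exact had (e.symm.trans f)
      · exact hk3.1 (f.symm.trans e)
    · rcases m2 with f | f | f
      · exact hbc (e.symm.trans f)
      · exact hbd (e.symm.trans f)
      · exact hk3.2.1 (f.symm.trans e)
    · have := hv e; exact h1 (by linear_combination this)
  by_cases hall : ∀ i, h i ⊆ myK5
  · by_cases hm0 : m = 0
    · subst hm0
      have c01 := hcons 0
      rw [show (0 : ZMod 3) + 1 = 1 by decide] at c01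
      have c12 := hcons 1
      rw [show (1 : ZMod 3) + 1 = 2 by decide] at c12
      have c20 := hcons 2
      rw [show (2 : ZMod 3) + 1 = 0 by decide] at c20
      have u01 : (h 0 ∪ h 1).card = 5 := by
        have huc := Finset.card_union_add_card_inter (h 0) (h 1)
        rw [c01, Finset.card_singleton] at huc
        have := hc3 0; have := hc3 1; omega
      have hsub : h 0 ∪ h 1 ⊆ myK5 := Finset.union_subset (hall 0) (hall 1)
      have hequ : h 0 ∪ h 1 = myK5 :=
        Finset.eq_of_subset_of_card_le hsub (by rw [u01, K5_card])
      have hsub2 : h 2 ⊆ h 0 ∪ h 1 := hequ ▸ hall 2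
      have hdec : h 2 = (h 2 ∩ h 0) ∪ (h 2 ∩ h 1) := by
        rw [← Finset.inter_union_distrib_left]
        exact (Finset.inter_eq_left.mpr hsub2).symm
      have hcard : (h 2).card ≤ 2 := by
        rw [hdec, c20, show h 2 ∩ h 1 = {v 2} from (Finset.inter_comm _ _).trans c12]
        exact le_trans (Finset.card_union_le _ _) (by simp)
      have := hc3 2; omega
    · have h3 : (3 : ZMod (m+3)) ≠ 0 := by
        have := hz 3 (by omega) (by omega); simpa using this
      have hd : h 0 ∩ h 2 = ∅ :=
        hfar 0 2 (fun e => h2 (by linear_combination -e))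
          (fun e => h1 (by linear_combination -e)) (fun e => h3 (by linear_combination e))
      have hu : (h 0 ∪ h 2).card = 6 := by
        rw [Finset.card_union_of_disjoint (Finset.disjoint_iff_inter_eq_empty.mpr hd),
          hc3, hc3]
      have hle := Finset.card_le_card (Finset.union_subset (hall 0) (hall 2))
      rw [hu, K5_card] at hle
      omega
  · push_neg at hall
    obtain ⟨p, hp⟩ := hall
    have hadj : ∃ q : ZMod (m+3), ¬ h q ⊆ myK5 ∧ ¬ h (q+1) ⊆ myK5 := by
      by_cases hn : h (p+1) ⊆ myK5
      · by_cases hn' : h (p-1) ⊆ myK5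
        · exfalso
          rcases hcl p with ⟨ha, hb⟩ | ⟨ha, hb⟩ | hB
          · exact gen1 p 0 1 (by decide)
              (fun x hx => ⟨(K5_ne x hx).1, (K5_ne x hx).2.1⟩) ha hb hn' hn
          · exact gen1 p 2 3 (by decide)
              (fun x hx => ⟨(K5_ne x hx).2.2.1, (K5_ne x hx).2.2.2⟩) ha hb hn' hn
          · exact hp hB
        · exact ⟨p - 1, hn', by rw [show p - 1 + 1 = p by ring]; exact hp⟩
      · exact ⟨p, hp, hn⟩
    obtain ⟨q, hq, hq1⟩ := hadj
    rcases hcl q with ⟨a0, a1⟩ | ⟨a2, a3⟩ | hB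
    · rcases hcl (q+1) with ⟨b0, b1⟩ | ⟨b2, b3⟩ | hB'
      · have := huniq 0 1 (by decide) q (q+1) a0 a1 b0 b1
        exact h1 (by linear_combination -this)
      · have hBm : h (q-1) ⊆ myK5 := by
          rcases hcl (q-1) with ⟨c0, c1⟩ | ⟨c2, c3⟩ | hB'
          · exfalso
            have := huniq 0 1 (by decide) (q-1) q c0 c1 a0 a1
            exact h1 (by linear_combination -this)
          · exfalso
            have := huniq 2 3 (by decide) (q-1) (q+1) c2 c3 b2 b3
            exact h2 (by linear_combination -this)
          · exact hB'
        have hBp : h (q+1+1) ⊆ myK5 := by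
          rcases hcl (q+1+1) with ⟨c0, c1⟩ | ⟨c2, c3⟩ | hB'
          · exfalso
            have := huniq 0 1 (by decide) (q+1+1) q c0 c1 a0 a1
            exact h2 (by linear_combination this)
          · exfalso
            have := huniq 2 3 (by decide) (q+1+1) (q+1) c2 c3 b2 b3
            exact h1 (by linear_combination this)
          · exact hB'
        exact gen2 q 0 1 2 3 (by decide) (by decide) (by decide) (by decide) (by decide)
          (by decide) K5_ne a0 a1 b2 b3 hBm hBp
      · exact hq1 hB'
    · rcases hcl (q+1) with ⟨b0, b1⟩ | ⟨b2, b3⟩ | hB'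
      · have hBm : h (q-1) ⊆ myK5 := by
          rcases hcl (q-1) with ⟨c0, c1⟩ | ⟨c2, c3⟩ | hB'
          · exfalso
            have := huniq 0 1 (by decide) (q-1) (q+1) c0 c1 b0 b1
            exact h2 (by linear_combination -this)
          · exfalso
            have := huniq 2 3 (by decide) (q-1) q c2 c3 a2 a3
            exact h1 (by linear_combination -this)
          · exact hB'
        have hBp : h (q+1+1) ⊆ myK5 := by
          rcases hcl (q+1+1) with ⟨c0, c1⟩ | ⟨c2, c3⟩ | hB'
          · exfalso
            have := huniq 0 1 (by decide) (q+1+1) (q+1) c0 c1 b0 b1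
            exact h1 (by linear_combination this)
          · exfalso
            have := huniq 2 3 (by decide) (q+1+1) q c2 c3 a2 a3
            exact h2 (by linear_combination this)
          · exact hB'
        exact gen2 q 2 3 0 1 (by decide) (by decide) (by decide) (by decide) (by decide)
          (by decide)
          (fun x hx => ⟨(K5_ne x hx).2.2.1, (K5_ne x hx).2.2.2, (K5_ne x hx).1,
            (K5_ne x hx).2.1⟩) a2 a3 b0 b1 hBm hBp
      · have := huniq 2 3 (by decide) q (q+1) a2 a3 b2 b3
        exact h1 (by linear_combination -this)
      · exact hq1 hB'
    · exact hq hB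

/-- There is a 3-uniform linear-cycle-free hypergraph on 9 vertices in which every
vertex has degree exactly 8. -/
theorem nine_vertex_example :
    ∃ E : Finset (Finset (Fin 9)),
      (∀ e ∈ E, e.card = 3) ∧ ¬ HasLinearCycle E ∧ ∀ v : Fin 9, hDegree E v = 8 := by
  refine ⟨E9, E9_card3, ?_, E9_deg⟩
  rintro ⟨k, v, h, hk3, hv, -, hE, hcons, hfar⟩
  exact no_cycle_aux k v h hk3 hv hE hcons hfar
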